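/- Let g(x) = x/‖x‖ on ℝⁿ\{0} with components gᵢ. Then for any x ≠ 0 and any ε ∈ ℝⁿ, the vector a with aᵢ = εᵀ H_{gᵢ}(x) ε + 2(xᵀε/‖x‖²)(J_g(x)ε)ᵢ equals x·(−εᵀε/‖x‖³ + (xᵀε)²/‖x‖⁵), and consequently ‖a‖ = εᵀ J_g(x)² ε. -/

import Mathlib

open RealInnerProductSpace

noncomputable section

variable {E : Type*} [NormedAddCommGroup E] [InnerProductSpace ℝ E]

lemma myHasFDerivAt_norm (x : E) (hx : x ≠ 0) :
    HasFDerivAt (fun y : E => ‖y‖) (‖x‖⁻¹ • innerSL ℝ x) x := by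
  have hne : (‖x‖ : ℝ) ^ 2 ≠ 0 := pow_ne_zero 2 (norm_ne_zero_iff.mpr hx)
  have h := ((hasStrictFDerivAt_norm_sq x).hasFDerivAt).sqrt hne
  have hfun : (fun y : E => Real.sqrt (‖y‖ ^ 2)) = fun y : E => ‖y‖ :=
    funext fun y => Real.sqrt_sq (norm_nonneg y)
  rw [hfun] at h
  convert h using 1
  rw [Real.sqrt_sq (norm_nonneg x)]
  ext v
  have hnx : (‖x‖ : ℝ) ≠ 0 := norm_ne_zero_iff.mpr hx
  simp only [ContinuousLinearMap.smul_apply, smul_eq_mul, ContinuousLinearMap.coe_smul',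
    Pi.smul_apply, two_smul, innerSL_apply_apply, ContinuousLinearMap.add_apply]
  field_simp
  ring

lemma myHasFDerivAt_invnorm (x : E) (hx : x ≠ 0) :
    HasFDerivAt (fun y : E => ‖y‖⁻¹)
      ((-(‖x‖ ^ 2)⁻¹) • (‖x‖⁻¹ • innerSL ℝ x)) x :=
  (hasDerivAt_inv (norm_ne_zero_iff.mpr hx)).comp_hasFDerivAt x (myHasFDerivAt_norm x hx)

lemma myHasFDerivAt_innerR (x ε : E) :
    HasFDerivAt (fun y : E => ⟪y, ε⟫) (innerSL ℝ ε) x := by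
  have : (fun y : E => ⟪y, ε⟫) = fun y : E => (innerSL ℝ ε) y :=
    funext fun y => by simp [real_inner_comm]
  rw [this]
  exact (innerSL ℝ ε).hasFDerivAt

set_option maxHeartbeats 1000000 in
/-- For `g(x) = x/‖x‖` on `ℝⁿ\{0}`: the vector `a` with
`aᵢ = εᵀ H_{gᵢ}(x) ε + 2(xᵀε/‖x‖²)(J_g(x)ε)ᵢ` equals `(−εᵀε/‖x‖³ + (xᵀε)²/‖x‖⁵) • x`, and
consequently `‖a‖ = εᵀ J_g(x)² ε`. -/
theorem hessian_identity_normalization {n : ℕ}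
    (g : EuclideanSpace ℝ (Fin n) → EuclideanSpace ℝ (Fin n))
    (hg : ∀ x, g x = ‖x‖⁻¹ • x)
    (x ε : EuclideanSpace ℝ (Fin n)) (hx : x ≠ 0)
    (a : EuclideanSpace ℝ (Fin n))
    (ha : ∀ i, a i = fderiv ℝ (fun y => fderiv ℝ (fun z => g z i) y ε) x ε
          + 2 * (⟪x, ε⟫ / ‖x‖ ^ 2) * (fderiv ℝ g x ε) i) :
    a = (-(‖ε‖ ^ 2) / ‖x‖ ^ 3 + ⟪x, ε⟫ ^ 2 / ‖x‖ ^ 5) • x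
      ∧ ‖a‖ = ⟪ε, fderiv ℝ g x (fderiv ℝ g x ε)⟫ := by
  have hnx : (‖x‖ : ℝ) ≠ 0 := norm_ne_zero_iff.mpr hx
  set J : EuclideanSpace ℝ (Fin n) → (EuclideanSpace ℝ (Fin n) →L[ℝ] EuclideanSpace ℝ (Fin n)) :=
    fun y =>
    ‖y‖⁻¹ • ContinuousLinearMap.id ℝ (EuclideanSpace ℝ (Fin n))
      + ((-(‖y‖ ^ 2)⁻¹) • (‖y‖⁻¹ • innerSL ℝ y)).smulRight y with hJ
  have hgder : ∀ y : EuclideanSpace ℝ (Fin n), y ≠ 0 → HasFDerivAt g (J y) y := by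
    intro y hy
    have h1 : HasFDerivAt (fun z : EuclideanSpace ℝ (Fin n) => ‖z‖⁻¹ • z)
        (‖y‖⁻¹ • ContinuousLinearMap.id ℝ (EuclideanSpace ℝ (Fin n))
          + ((-(‖y‖ ^ 2)⁻¹) • (‖y‖⁻¹ • innerSL ℝ y)).smulRight y) y :=
      (myHasFDerivAt_invnorm y hy).smul (hasFDerivAt_id y)
    have hge : g = fun z : EuclideanSpace ℝ (Fin n) => ‖z‖⁻¹ • z := funext hg
    rw [hge]; exact h1
  have hJval : ∀ (y v : EuclideanSpace ℝ (Fin n)), y ≠ 0 →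
      J y v = ‖y‖⁻¹ • v - ((⟪y, v⟫ / ‖y‖ ^ 3)) • y := by
    intro y v hy
    have hny : (‖y‖ : ℝ) ≠ 0 := norm_ne_zero_iff.mpr hy
    have hco : (-(‖y‖ ^ 2)⁻¹ : ℝ) * (‖y‖⁻¹ * ⟪y, v⟫) = -(⟪y, v⟫ / ‖y‖ ^ 3) := by
      have h3 : (‖y‖ : ℝ) ^ 3 = ‖y‖ ^ 2 * ‖y‖ := by ring
      rw [h3, div_eq_mul_inv, mul_inv]
      ring
    simp only [hJ, ContinuousLinearMap.add_apply, ContinuousLinearMap.smul_apply,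
      ContinuousLinearMap.coe_id', id_eq, ContinuousLinearMap.smulRight_apply,
      innerSL_apply_apply, smul_eq_mul]
    rw [hco, sub_eq_add_neg, ← neg_smul]
  have hJvali : ∀ (y v : EuclideanSpace ℝ (Fin n)) (i : Fin n), y ≠ 0 →
      J y v i = ‖y‖⁻¹ * v i - (⟪y, v⟫ / ‖y‖ ^ 3) * y i := by
    intro y v i hy
    rw [hJval y v hy]
    simp [PiLp.sub_apply, PiLp.smul_apply, smul_eq_mul]
  have hcompder : ∀ (i : Fin n) (y : EuclideanSpace ℝ (Fin n)), y ≠ 0 →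
      HasFDerivAt (fun z => g z i) ((EuclideanSpace.proj i).comp (J y)) y := by
    intro i y hy
    exact ((EuclideanSpace.proj (𝕜 := ℝ) i).hasFDerivAt.comp y (hgder y hy))
  have hev : ∀ i : Fin n,
      (fun y => fderiv ℝ (fun z => g z i) y ε) =ᶠ[nhds x]
      (fun y : EuclideanSpace ℝ (Fin n) => ‖y‖⁻¹ * ε i - (‖y‖⁻¹ * ‖y‖⁻¹ * ‖y‖⁻¹ * ⟪y, ε⟫) * y i) := by
    intro i
    have hmem : {y : EuclideanSpace ℝ (Fin n) | y ≠ 0} ∈ nhds x :=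
      IsOpen.mem_nhds isOpen_compl_singleton hx
    filter_upwards [hmem] with y hy
    have hfd := (hcompder i y hy).fderiv
    rw [hfd]
    have hny : (‖y‖ : ℝ) ≠ 0 := norm_ne_zero_iff.mpr hy
    simp only [ContinuousLinearMap.coe_comp', Function.comp_apply, PiLp.proj_apply]
    rw [hJvali y ε i hy]
    field_simp
  have hφder : ∀ i : Fin n,
      fderiv ℝ (fun y : EuclideanSpace ℝ (Fin n) =>
        ‖y‖⁻¹ * ε i - (‖y‖⁻¹ * ‖y‖⁻¹ * ‖y‖⁻¹ * ⟪y, ε⟫) * y i) x ε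
      = -(‖ε‖ ^ 2) * x i / ‖x‖ ^ 3 - 2 * ⟪x, ε⟫ * ε i / ‖x‖ ^ 3
        + 3 * ⟪x, ε⟫ ^ 2 * x i / ‖x‖ ^ 5 := by
    intro i
    have h1 := myHasFDerivAt_invnorm x hx
    have h2 := myHasFDerivAt_innerR x ε
    have h3 := (EuclideanSpace.proj (𝕜 := ℝ) i).hasFDerivAt (x := x)
    have H : HasFDerivAt (fun y : EuclideanSpace ℝ (Fin n) =>
        ‖y‖⁻¹ * ε i - (‖y‖⁻¹ * ‖y‖⁻¹ * ‖y‖⁻¹ * ⟪y, ε⟫) * y i)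
        _ x := ((h1.mul_const (ε i)).sub ((((h1.mul h1).mul h1).mul h2).mul h3))
    rw [H.fderiv]
    simp only [ContinuousLinearMap.sub_apply, ContinuousLinearMap.add_apply,
      ContinuousLinearMap.smul_apply, smul_eq_mul, ContinuousLinearMap.coe_smul',
      Pi.smul_apply, innerSL_apply_apply, PiLp.proj_apply, Pi.mul_apply, Pi.pow_apply,
      real_inner_self_eq_norm_sq]
    have hεv : ⟪ε, ε⟫ = ‖ε‖ ^ 2 := real_inner_self_eq_norm_sq ε
    have hxε : ⟪ε, x⟫ = ⟪x, ε⟫ := real_inner_comm x ε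
    field_simp
    ring
  have hai : ∀ i : Fin n,
      a i = (-(‖ε‖ ^ 2) / ‖x‖ ^ 3 + ⟪x, ε⟫ ^ 2 / ‖x‖ ^ 5) * x i := by
    intro i
    rw [ha i, (hev i).fderiv_eq, hφder i, (hgder x hx).fderiv, hJvali x ε i hx]
    field_simp
    ring
  have haeq : a = (-(‖ε‖ ^ 2) / ‖x‖ ^ 3 + ⟪x, ε⟫ ^ 2 / ‖x‖ ^ 5) • x := by
    ext i
    rw [hai i]
    simp [PiLp.smul_apply, smul_eq_mul]
  refine ⟨haeq, ?_⟩
  have hJJ : ⟪ε, fderiv ℝ g x (fderiv ℝ g x ε)⟫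
      = ‖ε‖ ^ 2 / ‖x‖ ^ 2 - ⟪x, ε⟫ ^ 2 / ‖x‖ ^ 4 := by
    rw [(hgder x hx).fderiv, hJval x (J x ε) hx, hJval x ε hx]
    simp only [inner_sub_right, inner_smul_right, real_inner_smul_right,
      inner_sub_left, inner_smul_left, real_inner_comm ε x,
      real_inner_self_eq_norm_sq, RCLike.star_def, conj_trivial]
    field_simp
    ring
  rw [hJJ, haeq, norm_smul, Real.norm_eq_abs]
  have hcs : ⟪x, ε⟫ ^ 2 ≤ ‖x‖ ^ 2 * ‖ε‖ ^ 2 := by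
    have h := real_inner_mul_inner_self_le x ε
    rw [real_inner_self_eq_norm_sq, real_inner_self_eq_norm_sq] at h
    nlinarith [h]
  have hc : -(‖ε‖ ^ 2) / ‖x‖ ^ 3 + ⟪x, ε⟫ ^ 2 / ‖x‖ ^ 5 ≤ 0 := by
    rw [div_add_div _ _ (by positivity) (by positivity)]
    apply div_nonpos_of_nonpos_of_nonneg _ (by positivity)
    have h3 : (0:ℝ) < ‖x‖ ^ 3 := by positivity
    nlinarith [mul_le_mul_of_nonneg_left hcs (le_of_lt h3)]
  rw [abs_of_nonpos hc]
  field_simp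
  ring
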